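/- Let M ∈ ℝ^{m×n} have unit-norm columns and satisfy the RIP of order 2k with constant δ ∈ (0,1). Let x ∈ ℝⁿ have support L with |L| = k, let T ⊆ {1,…,n} with |T| ≤ k and L ⊄ T, set κ = |L∖T| ≥ 1, let x̃ be x restricted to L∖T (zero elsewhere), and let ỹ = M x̃. Then there exists an index i ∈ L∖T such that ⟨R_T m_(i), R_T ỹ⟩² ≥ (c_δ/κ) ‖R_T m_(i)‖² ‖R_T ỹ‖², where c_δ = (1−δ²)(1−δ); in other words, the squared cosine of the angle between R_T m_(i) and R_T ỹ is at least c_δ/κ. -/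

import Mathlib

open Matrix

noncomputable section

/-- `M` satisfies the RIP of order `s` with constant `δ` if
`(1−δ)‖v‖² ≤ ‖Mv‖² ≤ (1+δ)‖v‖²` for every `v` with at most `s` nonzero entries. -/
def RIP {m n : ℕ} (M : Matrix (Fin m) (Fin n) ℝ) (s : ℕ) (δ : ℝ) : Prop :=
  ∀ v : Fin n → ℝ, (∃ S : Finset (Fin n), S.card ≤ s ∧ ∀ i ∉ S, v i = 0) →
    (1 - δ) * (v ⬝ᵥ v) ≤ (M *ᵥ v) ⬝ᵥ (M *ᵥ v) ∧
      (M *ᵥ v) ⬝ᵥ (M *ᵥ v) ≤ (1 + δ) * (v ⬝ᵥ v)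

/-- `M_T`: the submatrix of `M` of the columns indexed by `T`. -/
def colsOf {m n : ℕ} (M : Matrix (Fin m) (Fin n) ℝ) (T : Finset (Fin n)) :
    Matrix (Fin m) {i // i ∈ T} ℝ :=
  M.submatrix id fun j => (j : Fin n)

/-- `P_T = M_T (M_TᵀM_T)⁻¹ M_Tᵀ`. -/
def projT {m n : ℕ} (M : Matrix (Fin m) (Fin n) ℝ) (T : Finset (Fin n)) :
    Matrix (Fin m) (Fin m) ℝ :=
  colsOf M T * ((colsOf M T)ᵀ * colsOf M T)⁻¹ * (colsOf M T)ᵀ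

/-- `R_T = I − P_T`. -/
def residT {m n : ℕ} (M : Matrix (Fin m) (Fin n) ℝ) (T : Finset (Fin n)) :
    Matrix (Fin m) (Fin m) ℝ :=
  1 - projT M T

/-! ### Auxiliary definitions and lemmas -/

/-- Extension of a vector indexed by `T` to a vector on all of `Fin n`, zero off `T`. -/
def extT {n : ℕ} (T : Finset (Fin n)) (c : {i // i ∈ T} → ℝ) : Fin n → ℝ :=
  fun j => if h : j ∈ T then c ⟨j, h⟩ else 0

lemma mulVec_extT {m n : ℕ} (M : Matrix (Fin m) (Fin n) ℝ) (T : Finset (Fin n))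
    (c : {i // i ∈ T} → ℝ) : M *ᵥ extT T c = colsOf M T *ᵥ c := by
  ext r
  show ∑ j : Fin n, M r j * extT T c j = ∑ j : {i // i ∈ T}, colsOf M T r j * c j
  rw [← Finset.sum_subset (Finset.subset_univ T) (by
    intro j _ hj
    simp [extT, hj])]
  rw [Finset.sum_subtype T (fun j => Iff.rfl) (fun j => M r j * extT T c j)]
  refine Finset.sum_congr rfl fun j _ => ?_
  simp [extT, j.2, colsOf]

lemma dot_extT {n : ℕ} (T : Finset (Fin n)) (c : {i // i ∈ T} → ℝ) :
    extT T c ⬝ᵥ extT T c = c ⬝ᵥ c := by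
  show ∑ j : Fin n, extT T c j * extT T c j = ∑ j : {i // i ∈ T}, c j * c j
  rw [← Finset.sum_subset (Finset.subset_univ T) (by
    intro j _ hj
    simp [extT, hj])]
  rw [Finset.sum_subtype T (fun j => Iff.rfl) (fun j => extT T c j * extT T c j)]
  refine Finset.sum_congr rfl fun j _ => ?_
  simp [extT, j.2]

lemma dot_self_nonneg' {α : Type*} [Fintype α] (v : α → ℝ) : 0 ≤ v ⬝ᵥ v :=
  Finset.sum_nonneg fun i _ => mul_self_nonneg _

lemma key_dot {m : ℕ} (R : Matrix (Fin m) (Fin m) ℝ) (hR : Rᵀ * R = R)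
    (u v : Fin m → ℝ) : (R *ᵥ u) ⬝ᵥ (R *ᵥ v) = u ⬝ᵥ (R *ᵥ v) := by
  rw [dotProduct_comm, dotProduct_mulVec, ← mulVec_transpose, mulVec_mulVec, hR,
    dotProduct_comm]

lemma gram_symm {m n : ℕ} (M : Matrix (Fin m) (Fin n) ℝ) (T : Finset (Fin n)) :
    ((colsOf M T)ᵀ * colsOf M T)ᵀ = (colsOf M T)ᵀ * colsOf M T := by
  rw [transpose_mul, transpose_transpose]

lemma proj_mul_cols {m n : ℕ} (M : Matrix (Fin m) (Fin n) ℝ) (T : Finset (Fin n))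
    (hG : IsUnit ((colsOf M T)ᵀ * colsOf M T).det) :
    projT M T * colsOf M T = colsOf M T := by
  unfold projT
  rw [Matrix.mul_assoc, Matrix.mul_assoc, Matrix.nonsing_inv_mul _ hG, Matrix.mul_one]

lemma proj_symm {m n : ℕ} (M : Matrix (Fin m) (Fin n) ℝ) (T : Finset (Fin n)) :
    (projT M T)ᵀ = projT M T := by
  unfold projT
  rw [transpose_mul, transpose_mul, transpose_transpose, transpose_nonsing_inv,
    gram_symm, Matrix.mul_assoc]

lemma proj_idem {m n : ℕ} (M : Matrix (Fin m) (Fin n) ℝ) (T : Finset (Fin n))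
    (hG : IsUnit ((colsOf M T)ᵀ * colsOf M T).det) :
    projT M T * projT M T = projT M T := by
  have hPunf : projT M T
      = colsOf M T * (((colsOf M T)ᵀ * colsOf M T)⁻¹ * (colsOf M T)ᵀ) := by
    unfold projT; rw [Matrix.mul_assoc]
  have hAP : (colsOf M T)ᵀ * projT M T = (colsOf M T)ᵀ := by
    rw [← proj_symm, ← transpose_mul, proj_mul_cols M T hG]
  calc projT M T * projT M T
      = (colsOf M T * (((colsOf M T)ᵀ * colsOf M T)⁻¹ * (colsOf M T)ᵀ)) * projT M T := by
        rw [← hPunf]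
    _ = colsOf M T * (((colsOf M T)ᵀ * colsOf M T)⁻¹ * ((colsOf M T)ᵀ * projT M T)) := by
        rw [Matrix.mul_assoc, Matrix.mul_assoc]
    _ = projT M T := by rw [hAP, ← hPunf]

lemma resid_symm_idem {m n : ℕ} (M : Matrix (Fin m) (Fin n) ℝ) (T : Finset (Fin n))
    (hG : IsUnit ((colsOf M T)ᵀ * colsOf M T).det) :
    (residT M T)ᵀ * residT M T = residT M T := by
  unfold residT
  rw [transpose_sub, transpose_one, proj_symm, Matrix.sub_mul, Matrix.one_mul,
    Matrix.mul_sub, Matrix.mul_one, proj_idem M T hG]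
  abel

set_option maxHeartbeats 2000000 in
theorem stmt6 {m n k : ℕ} (M : Matrix (Fin m) (Fin n) ℝ) (δ : ℝ)
    (hδ0 : 0 < δ) (hδ1 : δ < 1)
    (hunit : ∀ j : Fin n, (fun r => M r j) ⬝ᵥ (fun r => M r j) = 1)
    (hRIP : RIP M (2 * k) δ)
    (x : Fin n → ℝ) (L : Finset (Fin n)) (hsupp : ∀ i, x i ≠ 0 ↔ i ∈ L)
    (hL : L.card = k)
    (T : Finset (Fin n)) (hT : T.card ≤ k) (hLT : ¬ L ⊆ T)
    (κ : ℕ) (hκ : κ = (L \ T).card)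
    (xt : Fin n → ℝ) (hxt : ∀ i, xt i = if i ∈ L \ T then x i else 0)
    (yt : Fin m → ℝ) (hyt : yt = M *ᵥ xt) :
    ∃ i ∈ L \ T,
      ((residT M T *ᵥ fun r => M r i) ⬝ᵥ (residT M T *ᵥ yt)) ^ 2 ≥
        ((1 - δ ^ 2) * (1 - δ) / (κ : ℝ)) *
          (((residT M T *ᵥ fun r => M r i) ⬝ᵥ (residT M T *ᵥ fun r => M r i)) *
            ((residT M T *ᵥ yt) ⬝ᵥ (residT M T *ᵥ yt))) := by
  classical
  obtain ⟨a0, ha0L, ha0T⟩ := Finset.not_subset.mp hLT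
  have hSne : a0 ∈ L \ T := Finset.mem_sdiff.mpr ⟨ha0L, ha0T⟩
  have hκk : κ ≤ k := by
    rw [hκ, ← hL]; exact Finset.card_le_card Finset.sdiff_subset
  have hκ1 : 1 ≤ κ := by
    rw [hκ]; exact Finset.card_pos.mpr ⟨a0, hSne⟩
  -- Gram matrix is positive definite
  have hpd : ((colsOf M T)ᵀ * colsOf M T).PosDef := by
    rw [posDef_iff_dotProduct_mulVec]
    constructor
    · show _ᴴ = _
      ext i j
      simp only [conjTranspose_apply, Matrix.mul_apply, transpose_apply, star_trivial]
      exact Finset.sum_congr rfl fun r _ => mul_comm _ _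
    · intro c hc
      have hcc : (0 : ℝ) < c ⬝ᵥ c := by
        rcases lt_or_eq_of_le (dot_self_nonneg' c) with h | h
        · exact h
        · exact absurd (dotProduct_self_eq_zero.mp h.symm) hc
      have hstar : star c = c := by
        ext i; simp
      have h1 : star c ⬝ᵥ (((colsOf M T)ᵀ * colsOf M T) *ᵥ c)
          = (colsOf M T *ᵥ c) ⬝ᵥ (colsOf M T *ᵥ c) := by
        rw [hstar, ← mulVec_mulVec, dotProduct_mulVec, vecMul_transpose]
      rw [h1, ← mulVec_extT]
      have hrip := (hRIP (extT T c) ⟨T, le_trans hT (by omega),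
        fun i hi => dif_neg hi⟩).1
      rw [dot_extT] at hrip
      nlinarith
  have hG : IsUnit ((colsOf M T)ᵀ * colsOf M T).det := hpd.det_pos.ne'.isUnit
  have hRR : (residT M T)ᵀ * residT M T = residT M T := resid_symm_idem M T hG
  have hPtP : (projT M T)ᵀ * projT M T = projT M T := by
    rw [proj_symm, proj_idem M T hG]
  set S := L \ T with hSdef
  set R := residT M T with hRdef
  obtain ⟨a, ha⟩ : ∃ a : Fin n → ℝ, a = fun i => (fun r => M r i) ⬝ᵥ (R *ᵥ yt) :=
    ⟨_, rfl⟩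
  set N : ℝ := (R *ᵥ yt) ⬝ᵥ (R *ᵥ yt) with hNdef
  set X : ℝ := xt ⬝ᵥ xt with hXdef
  have hxtS : ∀ i ∉ S, xt i = 0 := fun i hi => by rw [hxt]; exact if_neg hi
  have hN0 : 0 ≤ N := dot_self_nonneg' _
  -- ∑_{i ∈ S} x i * a i = N
  have hstep : ((R *ᵥ yt) ᵥ* M) = a := by
    ext i
    rw [ha]
    show ∑ r, (R *ᵥ yt) r * M r i = ∑ r, M r i * (R *ᵥ yt) r
    exact Finset.sum_congr rfl fun r _ => mul_comm _ _
  have hsum : ∑ i ∈ S, x i * a i = N := by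
    have h1 : N = a ⬝ᵥ xt := by
      rw [hNdef, key_dot R hRR, dotProduct_comm]
      nth_rewrite 2 [hyt]
      rw [dotProduct_mulVec, hstep]
    rw [h1]
    show ∑ i ∈ S, x i * a i = ∑ i : Fin n, a i * xt i
    rw [← Finset.sum_subset (Finset.subset_univ S)
      (fun i _ hi => by rw [hxtS i hi, mul_zero])]
    refine Finset.sum_congr rfl fun i hi => ?_
    rw [hxt, if_pos hi, mul_comm]
  -- X as a sum over S, and positivity
  have hXsum : X = ∑ i ∈ S, x i * x i := by
    show ∑ i : Fin n, xt i * xt i = _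
    rw [← Finset.sum_subset (Finset.subset_univ S)
      (fun i _ hi => by rw [hxtS i hi, mul_zero])]
    exact Finset.sum_congr rfl fun i hi => by rw [hxt, if_pos hi]
  have hXpos : 0 < X := by
    rw [hXsum]
    have hx0 : x a0 ≠ 0 := (hsupp a0).mpr ha0L
    exact lt_of_lt_of_le (mul_self_pos.mpr hx0)
      (Finset.single_le_sum (fun i _ => mul_self_nonneg (x i)) hSne)
  -- Cauchy–Schwarz
  have hCS : N ^ 2 ≤ X * ∑ i ∈ S, a i ^ 2 := by
    rw [← hsum, hXsum]
    have h1 := Finset.sum_mul_sq_le_sq_mul_sq S x a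
    have h2 : ∑ i ∈ S, x i * x i = ∑ i ∈ S, x i ^ 2 :=
      Finset.sum_congr rfl fun i _ => (pow_two (x i)).symm
    rw [h2]; exact h1
  -- maximizing index
  obtain ⟨i0, hi0S, hmax⟩ := Finset.exists_max_image S (fun i => a i ^ 2) ⟨a0, hSne⟩
  have hsumbound : ∑ i ∈ S, a i ^ 2 ≤ (κ : ℝ) * a i0 ^ 2 := by
    have h1 := Finset.sum_le_card_nsmul S (fun i => a i ^ 2) (a i0 ^ 2) hmax
    rw [nsmul_eq_mul] at h1
    rw [hκ]
    exact h1
  -- RIP lower bound: (1 - δ) * X ≤ N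
  have hNX : (1 - δ) * X ≤ N := by
    obtain ⟨w, hw⟩ : ∃ w, w = ((colsOf M T)ᵀ * colsOf M T)⁻¹ *ᵥ ((colsOf M T)ᵀ *ᵥ yt) :=
      ⟨_, rfl⟩
    obtain ⟨z, hzdef⟩ : ∃ z, z = xt - extT T w := ⟨_, rfl⟩
    have h1 : projT M T *ᵥ yt = M *ᵥ extT T w := by
      unfold projT
      rw [← mulVec_mulVec, ← mulVec_mulVec, mulVec_extT, hw]
    have hRy : R *ᵥ yt = M *ᵥ z := by
      calc R *ᵥ yt = yt - projT M T *ᵥ yt := by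
            rw [hRdef]; unfold residT; rw [sub_mulVec, one_mulVec]
        _ = M *ᵥ xt - M *ᵥ extT T w := by rw [h1, hyt]
        _ = M *ᵥ z := by rw [hzdef, mulVec_sub]
    have hzsupp : ∀ i ∉ S ∪ T, z i = 0 := by
      intro i hi
      have h1 : xt i = 0 := hxtS i fun h => hi (Finset.mem_union_left _ h)
      have h2 : extT T w i = 0 := dif_neg fun h => hi (Finset.mem_union_right _ h)
      rw [hzdef]
      simp [h1, h2]
    have hcard : (S ∪ T).card ≤ 2 * k := by
      have h1 := Finset.card_union_le S T
      have hSk : S.card ≤ k := by rw [← hκ]; exact hκk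
      omega
    have hrip := (hRIP z ⟨S ∪ T, hcard, hzsupp⟩).1
    have hzx : X ≤ z ⬝ᵥ z := by
      show (∑ i, xt i * xt i) ≤ ∑ i, z i * z i
      refine Finset.sum_le_sum fun i _ => ?_
      by_cases hiT : i ∈ T
      · have h0 : xt i = 0 := by
          rw [hxt]; exact if_neg fun h => (Finset.mem_sdiff.mp h).2 hiT
        rw [h0]; simpa using mul_self_nonneg (z i)
      · have h0 : z i = xt i := by
          rw [hzdef]; simp [extT, dif_neg hiT]
        rw [h0]
    have hNz : N = (M *ᵥ z) ⬝ᵥ (M *ᵥ z) := by rw [hNdef, hRy]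
    have hδ' : (0 : ℝ) ≤ 1 - δ := by linarith
    nlinarith [mul_le_mul_of_nonneg_left hzx hδ']
  -- the chosen column
  refine ⟨i0, hi0S, ?_⟩
  rw [key_dot R hRR]
  have hai0 : (fun r => M r i0) ⬝ᵥ (R *ᵥ yt) = a i0 := by rw [ha]
  rw [hai0]
  obtain ⟨B, hBdef⟩ : ∃ B, B = (R *ᵥ fun r => M r i0) ⬝ᵥ (R *ᵥ fun r => M r i0) :=
    ⟨_, rfl⟩
  rw [← hBdef]
  have hB0 : 0 ≤ B := hBdef ▸ dot_self_nonneg' _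
  have hB1 : B ≤ 1 := by
    have h1 : B = (fun r => M r i0) ⬝ᵥ (R *ᵥ fun r => M r i0) := by
      rw [hBdef, key_dot R hRR]
    have h2 : R *ᵥ (fun r => M r i0) = (fun r => M r i0) - projT M T *ᵥ (fun r => M r i0) := by
      rw [hRdef]; unfold residT; rw [sub_mulVec, one_mulVec]
    have h3 : (0 : ℝ) ≤ (fun r => M r i0) ⬝ᵥ (projT M T *ᵥ fun r => M r i0) := by
      rw [← key_dot (projT M T) hPtP]
      exact dot_self_nonneg' _
    rw [h1, h2, dotProduct_sub, hunit i0]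
    linarith
  -- final arithmetic
  have hκpos : (0 : ℝ) < (κ : ℝ) := by exact_mod_cast hκ1
  rw [ge_iff_le, div_mul_eq_mul_div, div_le_iff₀ hκpos]
  have h1 : N ^ 2 ≤ X * ((κ : ℝ) * a i0 ^ 2) :=
    le_trans hCS (mul_le_mul_of_nonneg_left hsumbound hXpos.le)
  have h2 : (1 - δ) * N * X ≤ ((κ : ℝ) * a i0 ^ 2) * X := by
    nlinarith [mul_le_mul_of_nonneg_left hNX hN0]
  have h3 : (1 - δ) * N ≤ (κ : ℝ) * a i0 ^ 2 :=
    le_of_mul_le_mul_right (by linarith) hXpos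
  have h4 : (0 : ℝ) < 1 - δ := by linarith
  have h5 : (0 : ℝ) < 1 + δ := by linarith
  have hc0 : (0 : ℝ) ≤ (1 - δ ^ 2) * (1 - δ) := by nlinarith [mul_pos (mul_pos h4 h5) h4]
  have hcB : (1 - δ ^ 2) * (1 - δ) * B ≤ 1 - δ := by
    nlinarith [mul_le_mul_of_nonneg_right hB1 hc0, mul_pos (mul_pos h4 h5) h4,
      mul_nonneg (mul_nonneg h4.le h5.le) (mul_pos h4 h5).le]
  nlinarith [mul_le_mul_of_nonneg_right hcB hN0]

end
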